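/- arXiv:1610.09690 — 4 statements merged into one kernel-verified Lean document; each statement's English description precedes it below -/
import Mathlib

section
/- Let N ≡ 7 (mod 8) be a prime and let K = ℚ(√−N). Suppose 𝔭 is a prime ideal of the ring of integers 𝓞_K with absolute norm 2, and suppose the class of 𝔭 in the ideal class group Cl(K) has odd order r. Then 2^(r+2) ≥ N (equivalently, r ≥ log₂(N/4)). -/
open NumberField

set_option maxHeartbeats 1000000 in
/-- Let `N ≡ 7 (mod 8)` be a prime and `K = ℚ(√−N)`. If `𝔭` is a prime ideal of `𝓞 K`
of absolute norm `2` whose class in `Cl(K)` has odd order `r`, then `2^(r+2) ≥ N`. -/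
theorem stmt_2 (N : ℕ) (hN : N.Prime) (hmod : N % 8 = 7)
    (K : Type*) [Field K] [NumberField K]
    (hdeg : Module.finrank ℚ K = 2) (α : K) (hα : α ^ 2 = -(N : K))
    (𝔭 : Ideal (𝓞 K)) (hprime : 𝔭.IsPrime) (h0 : 𝔭 ≠ 0)
    (hnorm : Ideal.absNorm 𝔭 = 2)
    (r : ℕ) (hr_odd : Odd r)
    (hr : orderOf (ClassGroup.mk0 ⟨𝔭, mem_nonZeroDivisors_of_ne_zero h0⟩) = r) :
    N ≤ 2 ^ (r + 2) := by
  have hNQ : (0:ℚ) < (N:ℚ) := by exact_mod_cast hN.pos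
  -- linear independence of 1, α
  have hli : LinearIndependent ℚ ![(1:K), α] := by
    rw [LinearIndependent.pair_iff]
    intro s t hst
    have ht : t = 0 := by
      by_contra htne
      have hAt : algebraMap ℚ K t ≠ 0 := by simpa using htne
      have hαval : α = algebraMap ℚ K (-s/t) := by
        have h1 : (algebraMap ℚ K) t * α = -((algebraMap ℚ K) s) := by
          have : t • α = -(s • (1:K)) := by linear_combination hst
          rwa [Algebra.smul_def, Algebra.smul_def, mul_one] at this
        rw [map_div₀, map_neg, eq_div_iff hAt]
        linear_combination h1
      have : ((-s/t)^2 : ℚ) = -(N:ℚ) := by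
        apply (algebraMap ℚ K).injective
        rw [map_pow, ← hαval, hα]
        push_cast
        ring
      nlinarith [sq_nonneg (-s/t)]
    subst ht
    refine ⟨?_, rfl⟩
    simpa [Algebra.smul_def] using hst
  -- basis
  let B : Module.Basis (Fin 2) ℚ K := basisOfLinearIndependentOfCardEqFinrank hli (by simp [hdeg])
  have hB : ⇑B = ![(1:K), α] := coe_basisOfLinearIndependentOfCardEqFinrank hli _
  have hB0 : B 0 = 1 := by rw [hB]; rfl
  have hB1 : B 1 = α := by rw [hB]; rfl
  -- principal
  have hprin : (𝔭 ^ r).IsPrincipal := by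
    have key : ClassGroup.mk0 ⟨𝔭 ^ r, mem_nonZeroDivisors_of_ne_zero (pow_ne_zero r h0)⟩ = 1 := by
      have h1 : (⟨𝔭, mem_nonZeroDivisors_of_ne_zero h0⟩ ^ r : nonZeroDivisors (Ideal (𝓞 K)))
          = ⟨𝔭 ^ r, mem_nonZeroDivisors_of_ne_zero (pow_ne_zero r h0)⟩ :=
        Subtype.ext (SubmonoidClass.coe_pow _ r)
      rw [← h1, map_pow, ← hr, pow_orderOf_eq_one]
    exact (ClassGroup.mk0_eq_one_iff _).mp key
  obtain ⟨x, hx⟩ := hprin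
  have hpow0 : 𝔭 ^ r ≠ 0 := pow_ne_zero _ h0
  have hx0 : x ≠ 0 := by
    rintro rfl
    rw [Set.singleton_zero, Submodule.span_zero] at hx
    exact hpow0 hx
  have habs : (Algebra.norm ℤ x).natAbs = 2 ^ r := by
    rw [← Ideal.absNorm_span_singleton, Ideal.span, ← hx, map_pow, hnorm]
  set y : K := (x : K) with hy_def
  set a : ℚ := B.repr y 0 with ha_def
  set b : ℚ := B.repr y 1 with hb_def
  have hy : y = algebraMap ℚ K a + algebraMap ℚ K b * α := by
    conv_lhs => rw [← B.sum_repr y]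
    rw [Fin.sum_univ_two, hB0, hB1, Algebra.smul_def, Algebra.smul_def, mul_one]
  have hyα : y * α = (-(N:ℚ) * b) • B 0 + a • B 1 := by
    rw [hB0, hB1, Algebra.smul_def, Algebra.smul_def, mul_one, map_mul, map_neg,
      map_natCast (algebraMap ℚ K)]
    linear_combination α * hy + (algebraMap ℚ K b) * hα
  have hrepr : B.repr (y * α) = Finsupp.single 0 (-(N:ℚ)*b) + Finsupp.single 1 a := by
    rw [hyα, map_add, map_smul, map_smul, B.repr_self, B.repr_self, Finsupp.smul_single,
      Finsupp.smul_single, smul_eq_mul, mul_one, smul_eq_mul, mul_one]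
  have hnormy : Algebra.norm ℚ y = a^2 + N * b^2 := by
    rw [Algebra.norm_eq_matrix_det B y, Matrix.det_fin_two]
    rw [Algebra.leftMulMatrix_eq_repr_mul, Algebra.leftMulMatrix_eq_repr_mul,
      Algebra.leftMulMatrix_eq_repr_mul, Algebra.leftMulMatrix_eq_repr_mul]
    rw [hB0, hB1, mul_one, hrepr, ← ha_def, ← hb_def]
    simp [Finsupp.single_apply]
    ring
  have htry : Algebra.trace ℚ K y = a + a := by
    rw [Algebra.trace_eq_matrix_trace B y, Matrix.trace_fin_two]
    rw [Algebra.leftMulMatrix_eq_repr_mul, Algebra.leftMulMatrix_eq_repr_mul,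
      hB0, hB1, mul_one, hrepr, ← ha_def]
    simp [Finsupp.single_apply]
  set n : ℤ := Algebra.norm ℤ x with hn_def
  set t : ℤ := Algebra.trace ℤ (𝓞 K) x with ht_def
  have hnQ : (n:ℚ) = a^2 + N*b^2 := by rw [hn_def, Algebra.coe_norm_int, hnormy]
  have htQ : (t:ℚ) = a + a := by rw [ht_def, Algebra.coe_trace_int, htry]
  have hn_nonneg : 0 ≤ n := by
    have : (0:ℚ) ≤ (n:ℚ) := by rw [hnQ]; positivity
    exact_mod_cast this
  have hn_eq : n = 2 ^ r := by
    rw [← Int.natAbs_of_nonneg hn_nonneg, habs]; push_cast; ring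
  have key : a^2 + (N:ℚ)*b^2 = 2^r := by rw [← hnQ, hn_eq]; push_cast; ring
  by_cases hb : b = 0
  · exfalso
    have hyQ : y = algebraMap ℚ K a := by rw [hy, hb]; simp
    have hint : IsIntegral ℤ a := by
      have h1 : IsIntegral ℤ y := x.2
      rw [hyQ] at h1
      exact (isIntegral_algebraMap_iff (algebraMap ℚ K).injective).mp h1
    obtain ⟨m, hm⟩ := IsIntegrallyClosed.isIntegral_iff.mp hint
    have hm2 : (m:ℚ)^2 = 2^r := by
      rw [show ((m:ℚ)) = a from hm]
      rw [← key, hb]; ring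
    have hm2' : m^2 = 2^r := by exact_mod_cast hm2
    have hnat : m.natAbs ^ 2 = 2 ^ r := by
      have h3 := congrArg Int.natAbs hm2'
      simpa [Int.natAbs_pow] using h3
    have heven : Even r := by
      have h2 := congrArg (fun f => Nat.factorization f 2) hnat
      simp [Nat.factorization_pow, Nat.Prime.factorization Nat.prime_two] at h2
      exact ⟨m.natAbs.factorization 2, by omega⟩
    exact (Nat.not_even_iff_odd.mpr hr_odd) heven
  · set c : ℚ := 2*b with hc_def
    have hc0 : c ≠ 0 := by simp [hc_def, hb]
    set m : ℤ := 4 * 2^r - t^2 with hm_def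
    have hmc : (m:ℚ) = N * c^2 := by
      have h1 : (m:ℚ) = 4 * 2^r - (t:ℚ)^2 := by rw [hm_def]; push_cast; ring
      rw [h1, htQ, ← key, hc_def]; ring
    have hcnum : (c.num:ℚ) = c * c.den := by
      have hden : ((c.den:ℚ)) ≠ 0 := by exact_mod_cast c.den_nz
      have h := Rat.num_div_den c
      rw [div_eq_iff hden] at h
      exact h.symm ▸ rfl
    have hnum : c.num^2 * (N:ℤ) = m * (c.den:ℤ)^2 := by
      have h4 : (c.num:ℚ)^2 * (N:ℚ) = (m:ℚ) * (c.den:ℚ)^2 := by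
        rw [hcnum, hmc]; ring
      exact_mod_cast h4
    have hcop : IsCoprime ((c.den:ℤ)) c.num := by
      rw [Int.isCoprime_iff_gcd_eq_one]
      simpa [Int.gcd, Nat.coprime_comm] using c.reduced
    have hd2 : ((c.den:ℤ))^2 ∣ (N:ℤ) := by
      have h5 : ((c.den:ℤ))^2 ∣ c.num^2 * (N:ℤ) := ⟨m, by linarith [hnum]⟩
      exact ((hcop.pow).dvd_of_dvd_mul_left h5)
    have hdN : c.den^2 ∣ N := by exact_mod_cast hd2
    have hden1 : c.den = 1 := by
      rcases (Nat.dvd_prime hN).mp hdN with h1 | h1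
      · have : c.den ∣ 1 := h1 ▸ dvd_pow_self c.den two_ne_zero
        exact Nat.dvd_one.mp this
      · exfalso
        have hdvd : c.den ∣ N := h1 ▸ dvd_pow_self c.den (by norm_num)
        rcases (Nat.dvd_prime hN).mp hdvd with h2 | h2
        · rw [h2] at h1; simp at h1; omega
        · rw [h2] at h1
          have := hN.two_le
          nlinarith
    have hceq : (c.num:ℚ) = c := by rw [hcnum, hden1]; simp
    have hcnum0 : c.num ≠ 0 := Rat.num_ne_zero.mpr hc0
    have hc1 : (1:ℤ) ≤ c.num^2 := by nlinarith [Int.one_le_abs hcnum0, sq_abs c.num]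
    have hc1Q : (1:ℚ) ≤ c^2 := by
      rw [← hceq]
      exact_mod_cast hc1
    have hfinal : (N:ℚ) ≤ 2^(r+2) := by
      have h6 : (N:ℚ) * c^2 ≤ 4 * 2^r := by
        have h1 : (m:ℚ) = 4 * 2^r - (t:ℚ)^2 := by rw [hm_def]; push_cast; ring
        nlinarith [sq_nonneg ((t:ℚ)), hmc, h1]
      have h7 : (N:ℚ) ≤ (N:ℚ) * c^2 := by nlinarith
      calc (N:ℚ) ≤ 4 * 2^r := le_trans h7 h6
        _ = 2^(r+2) := by ring
    exact_mod_cast hfinal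
end

section
/- Let p be a prime, let r be a positive integer not divisible by p, let K be a field of characteristic p equipped with its 𝔽_p-algebra structure, and let ζ ∈ K be a primitive r-th root of unity. Set λ = ζ + ζ⁻¹. Then the degree [𝔽_p(λ) : 𝔽_p] of the subfield of K generated by λ over the prime field 𝔽_p equals the least positive integer m such that p^m ≡ 1 (mod r) or p^m ≡ -1 (mod r). -/
/-- Let `p` be a prime, `r` a positive integer not divisible by `p`, `K` a field of
characteristic `p` with its `𝔽_p`-algebra structure, and `ζ ∈ K` a primitive `r`-th root of
unity. Then `[𝔽_p(ζ + ζ⁻¹) : 𝔽_p]` equals the least positive integer `m` such that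
`p^m ≡ 1 (mod r)` or `p^m ≡ -1 (mod r)`. -/
theorem stmt_7 (p r : ℕ) (hp : p.Prime) [Fact p.Prime] (hr : 0 < r) (hpr : ¬ p ∣ r)
    (K : Type*) [Field K] [Algebra (ZMod p) K] [CharP K p]
    (ζ : K) (hζ : IsPrimitiveRoot ζ r) (m : ℕ)
    (hm : IsLeast {k : ℕ | 0 < k ∧ ((p : ZMod r) ^ k = 1 ∨ (p : ZMod r) ^ k = -1)} m) :
    Module.finrank (ZMod p) (IntermediateField.adjoin (ZMod p) {ζ + ζ⁻¹}) = m := by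
  haveI : NeZero r := ⟨hr.ne'⟩
  have hζ0 : ζ ≠ 0 := hζ.ne_zero hr.ne'
  set lam : K := ζ + ζ⁻¹ with hlam
  -- key equivalence: lam^(p^k) = lam ↔ (p : ZMod r)^k = ±1
  have key : ∀ k : ℕ, lam ^ (p ^ k) = lam ↔
      ((p : ZMod r) ^ k = 1 ∨ (p : ZMod r) ^ k = -1) := by
    intro k
    have hx0 : ζ ^ (p ^ k) ≠ 0 := pow_ne_zero _ hζ0
    have hfrob : lam ^ (p ^ k) = ζ ^ (p ^ k) + (ζ ^ (p ^ k))⁻¹ := by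
      rw [hlam, add_pow_char_pow, inv_pow]
    have h1 : ζ ^ (p ^ k) = ζ ↔ (p : ZMod r) ^ k = 1 := by
      have hpk1 : 1 ≤ p ^ k := Nat.one_le_pow _ _ hp.pos
      constructor
      · intro h
        have : ζ ^ (p ^ k - 1) * ζ = ζ := by
          rw [← pow_succ, Nat.sub_add_cancel hpk1, h]
        have h2 : ζ ^ (p ^ k - 1) = 1 := by
          field_simp at this; exact this
        have h3 : r ∣ p ^ k - 1 := (hζ.pow_eq_one_iff_dvd _).mp h2
        have h4 : (p : ℕ) ^ k ≡ 1 [MOD r] := ((Nat.modEq_iff_dvd' hpk1).mpr h3).symm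
        have := (ZMod.natCast_eq_natCast_iff _ _ _).mpr h4
        push_cast at this
        exact this
      · intro h
        have h4 : (p : ℕ) ^ k ≡ 1 [MOD r] := by
          have : ((p ^ k : ℕ) : ZMod r) = ((1 : ℕ) : ZMod r) := by push_cast; exact h
          exact (ZMod.natCast_eq_natCast_iff _ _ _).mp this
        have h3 : r ∣ p ^ k - 1 := (Nat.modEq_iff_dvd' hpk1).mp h4.symm
        have h2 : ζ ^ (p ^ k - 1) = 1 := (hζ.pow_eq_one_iff_dvd _).mpr h3
        calc ζ ^ (p ^ k) = ζ ^ (p ^ k - 1) * ζ := by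
              rw [← pow_succ, Nat.sub_add_cancel hpk1]
          _ = ζ := by rw [h2, one_mul]
    have h2 : ζ ^ (p ^ k) = ζ⁻¹ ↔ (p : ZMod r) ^ k = -1 := by
      have heq : ζ ^ (p ^ k) = ζ⁻¹ ↔ ζ ^ (p ^ k + 1) = 1 := by
        rw [pow_succ]
        constructor
        · intro h; rw [h, inv_mul_cancel₀ hζ0]
        · intro h; rw [mul_comm] at h; exact eq_inv_of_mul_eq_one_right h
      rw [heq, hζ.pow_eq_one_iff_dvd]
      constructor
      · intro h
        have h0 : ((p ^ k + 1 : ℕ) : ZMod r) = 0 :=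
          (ZMod.natCast_eq_zero_iff _ _).mpr h
        push_cast at h0
        exact eq_neg_of_add_eq_zero_left h0
      · intro h
        have h0 : ((p ^ k + 1 : ℕ) : ZMod r) = 0 := by push_cast; rw [h]; ring
        exact (ZMod.natCast_eq_zero_iff _ _).mp h0
    rw [← h1, ← h2, hfrob]
    constructor
    · intro h
      have h' : ζ ^ (p ^ k) + (ζ ^ (p ^ k))⁻¹ = ζ + ζ⁻¹ := h.trans hlam
      have hix : ζ ^ (p ^ k) * (ζ ^ (p ^ k))⁻¹ = 1 := mul_inv_cancel₀ hx0
      have hiz : ζ * ζ⁻¹ = 1 := mul_inv_cancel₀ hζ0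
      have hfac : (ζ ^ (p ^ k) - ζ) * (ζ ^ (p ^ k) * ζ - 1) = 0 := by
        linear_combination (ζ ^ (p ^ k) * ζ) * h' + ζ ^ (p ^ k) * hiz - ζ * hix
      rcases mul_eq_zero.mp hfac with h' | h'
      · exact Or.inl (sub_eq_zero.mp h')
      · have hh := sub_eq_zero.mp h'
        rw [mul_comm] at hh
        exact Or.inr (eq_inv_of_mul_eq_one_right hh)
    · rintro (h | h)
      · rw [h]
      · rw [h, inv_inv, add_comm]
  -- lam is integral
  have hζint : IsIntegral (ZMod p) ζ := by
    refine ⟨Polynomial.X ^ r - Polynomial.C 1, Polynomial.monic_X_pow_sub_C 1 hr.ne', ?_⟩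
    simp [hζ.pow_eq_one]
  have hint : IsIntegral (ZMod p) lam := by
    have hinv : ζ⁻¹ = ζ ^ (r - 1) := by
      refine (eq_inv_of_mul_eq_one_right ?_).symm
      rw [← pow_succ', Nat.sub_add_cancel hr, hζ.pow_eq_one]
    rw [hlam, hinv]
    exact hζint.add (hζint.pow _)
  haveI hFD : FiniteDimensional (ZMod p) (IntermediateField.adjoin (ZMod p) {lam}) := by
    simpa [IntermediateField.adjoin_simple_le_iff] using
      IntermediateField.adjoin.finiteDimensional hint
  set F := IntermediateField.adjoin (ZMod p) {lam} with hF
  haveI : Finite F := Module.finite_of_finite (ZMod p)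
  haveI : Fintype F := Fintype.ofFinite F
  set n := Module.finrank (ZMod p) F with hn
  have hcard : Fintype.card F = p ^ n := by
    rw [Module.card_eq_pow_finrank (K := ZMod p) (V := F), ZMod.card]
  have hnpos : 0 < n := Module.finrank_pos
  -- n satisfies the condition
  have hmem : lam ^ (p ^ n) = lam := by
    have hl : lam ∈ F := IntermediateField.mem_adjoin_simple_self _ _
    have : (⟨lam, hl⟩ : F) ^ (p ^ n) = ⟨lam, hl⟩ := by
      rw [← hcard]; exact FiniteField.pow_card _
    have := congrArg (Subtype.val) this
    push_cast at this
    exact this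
  -- n is minimal
  have hmin : ∀ k, 0 < k → lam ^ (p ^ k) = lam → n ≤ k := by
    intro k hk hlk
    have hall : ∀ x : F, x ^ (p ^ k) = x := by
      rintro ⟨x, hx⟩
      have : x ^ (p ^ k) = x := by
        induction hx using IntermediateField.adjoin_induction with
        | mem y hy => rcases hy with rfl; exact hlk
        | algebraMap c => rw [← map_pow, ZMod.pow_card_pow]
        | add a b _ _ ha hb => rw [add_pow_char_pow, ha, hb]
        | inv a _ ha => rw [inv_pow, ha]
        | mul a b _ _ ha hb => rw [mul_pow, ha, hb]
      exact Subtype.ext (by push_cast; exact this)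
    classical
    -- count roots
    have hone : (1 : ℕ) < p ^ k := Nat.one_lt_pow hk.ne' hp.one_lt
    have hfne : (Polynomial.X ^ p ^ k - Polynomial.X : Polynomial F) ≠ 0 :=
      FiniteField.X_pow_card_pow_sub_X_ne_zero _ hk.ne' hp.one_lt
    have hsub : (Finset.univ : Finset F) ⊆
        (Polynomial.X ^ p ^ k - Polynomial.X : Polynomial F).roots.toFinset := by
      intro x _
      rw [Multiset.mem_toFinset, Polynomial.mem_roots hfne]
      simp [Polynomial.IsRoot, hall x]
    have hle : Fintype.card F ≤ p ^ k := by
      calc Fintype.card F ≤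
          (Polynomial.X ^ p ^ k - Polynomial.X : Polynomial F).roots.toFinset.card :=
            Finset.card_le_card hsub
        _ ≤ Multiset.card (Polynomial.X ^ p ^ k - Polynomial.X : Polynomial F).roots :=
            Multiset.toFinset_card_le _
        _ ≤ (Polynomial.X ^ p ^ k - Polynomial.X : Polynomial F).natDegree :=
            Polynomial.card_roots' _
        _ = p ^ k := FiniteField.X_pow_card_pow_sub_X_natDegree_eq _ hk.ne' hp.one_lt
    rw [hcard] at hle
    exact (Nat.pow_le_pow_iff_right hp.one_lt).mp hle
  obtain ⟨⟨hmpos, hmcond⟩, hleast⟩ := hm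
  have h1 : n ≤ m := hmin m hmpos ((key m).mpr hmcond)
  have h2 : m ≤ n := hleast ⟨hnpos, (key n).mp hmem⟩
  exact le_antisymm h1 h2
end

section
/- Let F be a field, let V be a finite-dimensional F-vector space, let T be a commutative F-subalgebra of End_F(V), and let t ∈ T. Suppose g ∈ F[X] is a monic irreducible polynomial of degree m dividing the characteristic polynomial of t. Then there exists an F-subspace W of V that is stable under every element of T, is simple as a T-module (W ≠ 0, and the only T-stable subspaces of V contained in W are 0 and W), and satisfies dim_F W ≥ m. -/
open Polynomial TensorProduct

private lemma commute_aeval' {R A : Type*} [CommSemiring R] [Semiring A] [Algebra R A]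
    {x y : A} (h : Commute x y) (p : R[X]) : Commute x (Polynomial.aeval y p) := by
  induction p using Polynomial.induction_on' with
  | add p q hp hq => simpa [map_add] using hp.add_right hq
  | monomial n a =>
    have h1 : Commute x ((algebraMap R A) a) := (Algebra.commutes a x).symm
    simpa [Polynomial.aeval_monomial] using h1.mul_right (h.pow_right n)

private lemma eval_charpoly' {n : Type*} [Fintype n] [DecidableEq n] {R : Type*} [CommRing R]
    (M : Matrix n n R) (μ : R) :
    M.charpoly.eval μ = (μ • (1 : Matrix n n R) - M).det := by
  rw [Matrix.charpoly, ← Polynomial.coe_evalRingHom, RingHom.map_det]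
  congr 1
  ext i j
  by_cases h : i = j <;>
    simp [h, Matrix.charmatrix_apply, RingHom.mapMatrix_apply, Matrix.map_apply,
      Matrix.sub_apply, Matrix.diagonal_apply, Matrix.one_apply, Matrix.smul_apply]

private lemma eval_charpoly_end {K M : Type*} [Field K] [AddCommGroup M] [Module K M]
    [FiniteDimensional K M] (f : Module.End K M) (μ : K) :
    f.charpoly.eval μ = LinearMap.det (μ • (1 : Module.End K M) - f) := by
  let b := Module.finBasis K M
  rw [← f.charpoly_toMatrix b, eval_charpoly', ← LinearMap.det_toMatrix b]
  congr 1
  rw [map_sub, map_smul, LinearMap.toMatrix_one]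


private lemma ker_aeval_ne_bot {F V : Type*} [Field F] [AddCommGroup V] [Module F V]
    [FiniteDimensional F V] (t : Module.End F V) (g : F[X]) (hirr : Irreducible g)
    (hdvd : g ∣ LinearMap.charpoly t) :
    LinearMap.ker (Polynomial.aeval t g) ≠ ⊥ := by
  intro hker
  have hinj : Function.Injective (Polynomial.aeval t g) := by
    rw [← LinearMap.ker_eq_bot]; exact hker
  haveI : Fact (Irreducible g) := ⟨hirr⟩
  set L := AdjoinRoot g with hL
  set μ : L := AdjoinRoot.root g with hμ
  set tL : Module.End L (L ⊗[F] V) := t.baseChange L with htL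
  haveI : FiniteDimensional L (L ⊗[F] V) := Module.Finite.base_change F L V
  -- μ is a root of g.map
  have hroot : (g.map (algebraMap F L)).eval μ = 0 := by
    rw [Polynomial.eval_map]
    exact AdjoinRoot.eval₂_root g
  have hdvd2 : g.map (algebraMap F L) ∣ tL.charpoly := by
    rw [htL, LinearMap.charpoly_baseChange]
    exact Polynomial.map_dvd _ hdvd
  have hch : tL.charpoly.eval μ = 0 := by
    obtain ⟨h2, heq⟩ := hdvd2
    rw [heq, Polynomial.eval_mul, hroot, zero_mul]
  have hdet : LinearMap.det (μ • (1 : Module.End L (L ⊗[F] V)) - tL) = 0 := by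
    rw [← eval_charpoly_end]; exact hch
  have hbot := LinearMap.bot_lt_ker_of_det_eq_zero hdet
  obtain ⟨v, hv, hv0⟩ := (Submodule.ne_bot_iff _).mp hbot.ne'
  have hv1 : tL v = μ • v := by
    have : (μ • (1 : Module.End L (L ⊗[F] V)) - tL) v = 0 := hv
    have h5 : μ • v - tL v = 0 := by simpa using this
    rw [sub_eq_zero] at h5; exact h5.symm
  -- v is killed by aeval tL (g.map)
  have hXC : (X - C μ) ∣ g.map (algebraMap F L) := dvd_iff_isRoot.mpr hroot
  obtain ⟨q, hq⟩ := hXC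
  have hkill : Polynomial.aeval tL (g.map (algebraMap F L)) v = 0 := by
    rw [hq, mul_comm, map_mul]
    have h1 : (Polynomial.aeval tL (X - C μ)) v = 0 := by
      simp [map_sub, Module.algebraMap_end_apply, hv1]
    rw [Module.End.mul_apply, h1, map_zero]
  -- but aeval tL (g.map) is the base change of aeval t g, which is injective
  have hbc : Polynomial.aeval tL (g.map (algebraMap F L)) =
      (Polynomial.aeval t g).baseChange L := by
    rw [Polynomial.aeval_map_algebraMap]
    have h2 := Polynomial.aeval_algHom_apply (Module.End.baseChangeHom F L V) t g
    have h3 : Module.End.baseChangeHom F L V t = tL := rfl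
    have h4 : Module.End.baseChangeHom F L V (Polynomial.aeval t g)
        = (Polynomial.aeval t g).baseChange L := rfl
    rw [h3] at h2
    rw [h2, h4]
  have hinj2 : Function.Injective ((Polynomial.aeval t g).baseChange L) := by
    have : ((Polynomial.aeval t g).baseChange L : L ⊗[F] V → L ⊗[F] V)
        = (Polynomial.aeval t g).lTensor L := LinearMap.baseChange_eq_ltensor _
    rw [this]
    exact Module.Flat.lTensor_preserves_injective_linearMap _ hinj
  apply hv0
  apply hinj2
  rw [← hbc, hkill, map_zero]


/-- Let `F` be a field, `V` a finite-dimensional `F`-vector space, `T` a commutative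
`F`-subalgebra of `End_F(V)`, and `t ∈ T`. If `g ∈ F[X]` is monic irreducible of degree `m`
and divides the characteristic polynomial of `t`, then there is an `F`-subspace `W ⊆ V`
stable under every element of `T`, simple as a `T`-module, with `dim_F W ≥ m`. -/
theorem stmt_11 (F : Type*) [Field F] (V : Type*) [AddCommGroup V] [Module F V]
    [FiniteDimensional F V]
    (T : Subalgebra F (Module.End F V)) (hcomm : ∀ a ∈ T, ∀ b ∈ T, a * b = b * a)
    (t : Module.End F V) (ht : t ∈ T)
    (g : Polynomial F) (hmonic : g.Monic) (hirr : Irreducible g)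
    (m : ℕ) (hdeg : g.natDegree = m)
    (hdvd : g ∣ LinearMap.charpoly t) :
    ∃ W : Submodule F V,
      (∀ s ∈ T, ∀ w ∈ W, s w ∈ W) ∧
      W ≠ ⊥ ∧
      (∀ W' : Submodule F V, (∀ s ∈ T, ∀ w ∈ W', s w ∈ W') → W' ≤ W → W' = ⊥ ∨ W' = W) ∧
      m ≤ Module.finrank F W := by
  classical
  set K : Submodule F V := LinearMap.ker (Polynomial.aeval t g) with hKdef
  have hK : K ≠ ⊥ := ker_aeval_ne_bot t g hirr hdvd
  -- K is T-stable
  have hKstable : ∀ s ∈ T, ∀ w ∈ K, s w ∈ K := by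
    intro s hs w hw
    have hst : Commute s t := hcomm s hs t ht
    have hcaev : Commute s (Polynomial.aeval t g) := commute_aeval' hst g
    have hw0 : Polynomial.aeval t g w = 0 := hw
    show Polynomial.aeval t g (s w) = 0
    have := congrFun (congrArg (fun f : Module.End F V => (f : V → V)) hcaev.symm) w
    simp only [Module.End.mul_apply] at this
    rw [this, hw0, map_zero]
  -- pick a minimal nonzero T-stable submodule of K
  have hP : ∃ n, ∃ W : Submodule F V,
      (∀ s ∈ T, ∀ w ∈ W, s w ∈ W) ∧ W ≠ ⊥ ∧ W ≤ K ∧ Module.finrank F W = n :=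
    ⟨Module.finrank F K, K, hKstable, hK, le_refl K, rfl⟩
  obtain ⟨W, hWs, hWne, hWK, hWrank⟩ := Nat.find_spec hP
  refine ⟨W, hWs, hWne, ?_, ?_⟩
  · -- simplicity
    intro W' hW's hW'le
    by_cases hbot : W' = ⊥
    · exact Or.inl hbot
    right
    have hmem : ∃ n, n = Module.finrank F W' ∧ True := ⟨_, rfl, trivial⟩
    have hle : Nat.find hP ≤ Module.finrank F W' :=
      Nat.find_min' hP ⟨W', hW's, hbot, le_trans hW'le hWK, rfl⟩
    exact Submodule.eq_of_le_of_finrank_le hW'le (hWrank ▸ hle)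
  · -- dimension bound
    obtain ⟨w, hwW, hw0⟩ := (Submodule.ne_bot_iff W).mp hWne
    have htW : ∀ i : ℕ, (t ^ i) w ∈ W := by
      intro i
      induction i with
      | zero => simpa using hwW
      | succ i ih =>
        have : t ^ (i + 1) = t * t ^ i := by rw [pow_succ']
        rw [this, Module.End.mul_apply]
        exact hWs t ht _ ih
    have hgw : Polynomial.aeval t g w = 0 := hWK hwW
    have hm : 0 < m := by
      rw [← hdeg]; exact hirr.natDegree_pos
    -- linear independence of t^i w, i < m, inside W
    have hindep : LinearIndependent F (fun i : Fin m => (⟨(t ^ (i : ℕ)) w, htW i⟩ : W)) := by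
      rw [Fintype.linearIndependent_iff]
      intro c hc
      have hcV : ∑ i : Fin m, c i • (t ^ (i : ℕ)) w = 0 := by
        have := congrArg (W.subtype) hc
        simpa [map_sum] using this
      set p : F[X] := ∑ i : Fin m, C (c i) * X ^ (i : ℕ) with hp
      have hpw : Polynomial.aeval t p w = 0 := by
        rw [hp, map_sum, LinearMap.sum_apply]
        rw [← hcV]
        refine Finset.sum_congr rfl fun i _ => ?_
        rw [map_mul, aeval_C, map_pow, aeval_X, Module.End.mul_apply,
          Module.algebraMap_end_apply]
      have hp0 : p = 0 := by
        by_contra hp0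
        have hdegp : p.degree < g.degree := by
          rw [hmonic.ne_zero |> Polynomial.degree_eq_natDegree, hdeg]
          refine lt_of_le_of_lt (Polynomial.degree_sum_le _ _) ?_
          rw [Finset.sup_lt_iff (by exact WithBot.bot_lt_coe m)]
          intro i _
          refine lt_of_le_of_lt (Polynomial.degree_C_mul_X_pow_le _ _) ?_
          exact_mod_cast i.2
        have hnd : ¬ g ∣ p := fun hd =>
          absurd (Polynomial.degree_le_of_dvd hd hp0) (not_le.mpr hdegp)
        have hcop : IsCoprime g p := hirr.coprime_iff_not_dvd.mpr hnd
        obtain ⟨a, b, hab⟩ := hcop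
        apply hw0
        have : Polynomial.aeval t (a * g + b * p) w = w := by
          rw [hab, map_one, Module.End.one_apply]
        rw [← this, map_add, map_mul, map_mul, LinearMap.add_apply,
          Module.End.mul_apply, Module.End.mul_apply, hgw, hpw, map_zero, map_zero, add_zero]
      intro i
      have := congrArg (fun q => Polynomial.coeff q (i : ℕ)) hp0
      simp only [hp, Polynomial.finset_sum_coeff, Polynomial.coeff_C_mul,
        Polynomial.coeff_X_pow, Polynomial.coeff_zero] at this
      rw [Finset.sum_eq_single i] at this
      · simpa using this
      · intro j _ hji
        have : ¬ ((i : ℕ) = (j : ℕ)) := fun h => hji (Fin.ext h.symm)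
        simp [this]
      · intro h; exact absurd (Finset.mem_univ i) h
    have := hindep.fintype_card_le_finrank
    simpa using this
end

section
/- Let V be a finite-dimensional ℚ-vector space, let T be a commutative ℚ-subalgebra of End_ℚ(V), and let t ∈ T be an element whose characteristic polynomial f has integer coefficients. Let p be a prime and suppose the reduction of f modulo p has an irreducible factor of degree m in 𝔽_p[X]. Then there exists a ℚ-subspace W of V that is stable under every element of T, is simple as a T-module, and satisfies dim_ℚ W ≥ m. -/
set_option maxHeartbeats 1000000
set_option synthInstance.maxHeartbeats 400000

open Polynomial

lemma exists_eigenvector_of_isRoot_charpoly {K W : Type*} [Field K] [AddCommGroup W] [Module K W]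
    [FiniteDimensional K W] (φ : Module.End K W) (μ : K)
    (h : (LinearMap.charpoly φ).eval μ = 0) :
    ∃ x : W, x ≠ 0 ∧ φ x = μ • x := by
  classical
  set ψ : Module.End K W := μ • (1 : Module.End K W) - φ with hψ
  have hdet : LinearMap.det ψ = 0 := by
    let b := Module.Free.chooseBasis K W
    let M := LinearMap.toMatrix b b φ
    have h1 : LinearMap.charpoly φ = M.charpoly := (LinearMap.charpoly_toMatrix φ b).symm
    have h2 : LinearMap.toMatrix b b ψ = Matrix.scalar _ μ - M := by
      rw [hψ, map_sub, map_smul, LinearMap.toMatrix_one]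
      congr 1
      simp [Matrix.smul_one_eq_diagonal, Matrix.scalar]
    rw [← LinearMap.det_toMatrix b, h2]
    have h3 : (M.charpoly).eval μ = (Matrix.scalar _ μ - M).det := by
      rw [Matrix.charpoly, eval_det, Matrix.matPolyEquiv_charmatrix]
      simp
    rw [← h3, ← h1, h]
  obtain ⟨x, hx, hx0⟩ := (Submodule.ne_bot_iff _).1
    (LinearMap.bot_lt_ker_of_det_eq_zero hdet).ne'
  refine ⟨x, hx0, ?_⟩
  have := LinearMap.mem_ker.1 hx
  rw [hψ] at this
  simp only [LinearMap.sub_apply, LinearMap.smul_apply, Module.End.one_apply] at this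
  exact (sub_eq_zero.mp this).symm

/-- An irreducible factor of the characteristic polynomial has nontrivial kernel at `t`. -/
lemma ker_aeval_ne_bot_of_irreducible_dvd_charpoly
    {V : Type*} [AddCommGroup V] [Module ℚ V] [FiniteDimensional ℚ V]
    (t : Module.End ℚ V) {q : Polynomial ℚ} (hq : Irreducible q)
    (hdvd : q ∣ LinearMap.charpoly t) :
    LinearMap.ker (Polynomial.aeval t q) ≠ ⊥ := by
  haveI : Fact (Irreducible q) := ⟨hq⟩
  set K := AdjoinRoot q
  set α : K := AdjoinRoot.root q
  -- base change
  set tK : Module.End K (TensorProduct ℚ K V) := t.baseChange K with htK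
  have hchar : LinearMap.charpoly tK = (LinearMap.charpoly t).map (algebraMap ℚ K) :=
    LinearMap.charpoly_baseChange t K
  have hroot : (LinearMap.charpoly tK).eval α = 0 := by
    obtain ⟨c, hc⟩ := hdvd
    rw [hchar, hc, Polynomial.map_mul, eval_mul]
    have : (q.map (algebraMap ℚ K)).eval α = 0 := by
      rw [eval_map, Subsingleton.elim (algebraMap ℚ K) (AdjoinRoot.of q)]; exact AdjoinRoot.eval₂_root q
    rw [this, zero_mul]
  obtain ⟨x, hx0, hx⟩ := exists_eigenvector_of_isRoot_charpoly tK α hroot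
  intro hker
  have hu : IsUnit (Polynomial.aeval t q) :=
    (LinearMap.isUnit_iff_ker_eq_bot _).2 hker
  have hu' : IsUnit ((Module.End.baseChangeHom ℚ K V) (Polynomial.aeval t q)) := hu.map _
  have key : ((Module.End.baseChangeHom ℚ K V) (Polynomial.aeval t q)) x = 0 := by
    have e1 : (Module.End.baseChangeHom ℚ K V) (Polynomial.aeval t q)
        = Polynomial.aeval ((Module.End.baseChangeHom ℚ K V) t) q :=
      (Polynomial.aeval_algHom_apply (Module.End.baseChangeHom ℚ K V) t q).symm
    have e2 : (Module.End.baseChangeHom ℚ K V) t = tK := rfl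
    have e3 : Polynomial.aeval (R := ℚ) tK q
        = Polynomial.aeval tK (q.map (algebraMap ℚ K)) :=
      (Polynomial.aeval_map_algebraMap K tK q).symm
    rw [e1, e2, e3]
    have hev : Module.End.HasEigenvector tK α x :=
      ⟨Module.End.mem_eigenspace_iff.2 hx, hx0⟩
    rw [Module.End.aeval_apply_of_hasEigenvector hev]
    have : (q.map (algebraMap ℚ K)).eval α = 0 := by
      rw [eval_map, Subsingleton.elim (algebraMap ℚ K) (AdjoinRoot.of q)]; exact AdjoinRoot.eval₂_root q
    rw [this, zero_smul]
  rw [LinearMap.isUnit_iff_ker_eq_bot] at hu'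
  apply hx0
  have : x ∈ LinearMap.ker ((Module.End.baseChangeHom ℚ K V) (Polynomial.aeval t q)) :=
    LinearMap.mem_ker.2 key
  rwa [hu', Submodule.mem_bot] at this

lemma exists_irreducible_factor_of_mod_p {f : Polynomial ℤ} (hmonic : f.Monic)
    {p : ℕ} (hp : p.Prime) {g : Polynomial (ZMod p)} (hirr : Irreducible g)
    (hdvd : g ∣ f.map (Int.castRingHom (ZMod p))) :
    ∃ h : Polynomial ℤ, Irreducible h ∧ h ∣ f ∧ g.natDegree ≤ h.natDegree := by
  haveI : Fact p.Prime := ⟨hp⟩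
  have hf0 : f ≠ 0 := hmonic.ne_zero
  have hfp0 : f.map (Int.castRingHom (ZMod p)) ≠ 0 := (hmonic.map _).ne_zero
  have hgp : Prime g := hirr.prime
  set χ := Int.castRingHom (ZMod p)
  have hassoc := UniqueFactorizationMonoid.prod_normalizedFactors hf0
  have hassoc2 : Associated
      (((UniqueFactorizationMonoid.normalizedFactors f).map (Polynomial.map χ)).prod)
      (f.map χ) := by
    have := hassoc.map (Polynomial.mapRingHom χ).toMonoidHom
    rwa [← Multiset.prod_hom (UniqueFactorizationMonoid.normalizedFactors f)
      (Polynomial.mapRingHom χ).toMonoidHom] at this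
  have hdvd2 : g ∣ ((UniqueFactorizationMonoid.normalizedFactors f).map
      (Polynomial.map χ)).prod := hdvd.trans hassoc2.symm.dvd
  obtain ⟨a, ha, hga⟩ := hgp.exists_mem_multiset_dvd hdvd2
  obtain ⟨h, hh, rfl⟩ := Multiset.mem_map.1 ha
  have hirr_h : Irreducible h := UniqueFactorizationMonoid.irreducible_of_normalized_factor _ hh
  have hhf : h ∣ f := UniqueFactorizationMonoid.dvd_of_mem_normalizedFactors hh
  have hmap0 : h.map χ ≠ 0 := by
    intro h0
    obtain ⟨c, hc⟩ := hhf
    apply hfp0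
    rw [hc, Polynomial.map_mul, h0, zero_mul]
  exact ⟨h, hirr_h, hhf,
    (Polynomial.natDegree_le_of_dvd hga hmap0).trans natDegree_map_le⟩

lemma aeval_restrict_apply {K V : Type*} [CommRing K] [AddCommGroup V] [Module K V]
    (t : Module.End K V) (q : Polynomial K) (W : Submodule K V)
    (h : ∀ x ∈ W, t x ∈ W) (w : W) :
    ((Polynomial.aeval (t.restrict h) q) w : V) = (Polynomial.aeval t q) w := by
  induction q using Polynomial.induction_on' with
  | add r s hr hs => simp [hr, hs]
  | monomial n a =>
      simp only [Polynomial.aeval_monomial, Module.End.mul_apply,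
        Module.algebraMap_end_apply, Module.End.pow_restrict, LinearMap.map_smul,
        Submodule.coe_smul, LinearMap.restrict_coe_apply]
      simp [Module.End.pow_restrict n h]

/-- Let `V` be a finite-dimensional `ℚ`-vector space, `T` a commutative `ℚ`-subalgebra of
`End_ℚ(V)`, and `t ∈ T` whose characteristic polynomial has integer coefficients, i.e.,
is the image of some `f ∈ ℤ[X]`. If `p` is a prime and the reduction of `f` mod `p` has an
irreducible factor of degree `m` in `𝔽_p[X]`, then there is a `ℚ`-subspace `W ⊆ V` stable
under every element of `T`, simple as a `T`-module, with `dim_ℚ W ≥ m`. -/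
theorem stmt_12 (V : Type*) [AddCommGroup V] [Module ℚ V] [FiniteDimensional ℚ V]
    (T : Subalgebra ℚ (Module.End ℚ V)) (hcomm : ∀ a ∈ T, ∀ b ∈ T, a * b = b * a)
    (t : Module.End ℚ V) (ht : t ∈ T)
    (f : Polynomial ℤ) (hf : f.map (Int.castRingHom ℚ) = LinearMap.charpoly t)
    (p : ℕ) (hp : p.Prime)
    (g : Polynomial (ZMod p)) (hirr : Irreducible g) (m : ℕ) (hdeg : g.natDegree = m)
    (hdvd : g ∣ f.map (Int.castRingHom (ZMod p))) :
    ∃ W : Submodule ℚ V,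
      (∀ s ∈ T, ∀ w ∈ W, s w ∈ W) ∧
      W ≠ ⊥ ∧
      (∀ W' : Submodule ℚ V, (∀ s ∈ T, ∀ w ∈ W', s w ∈ W') → W' ≤ W → W' = ⊥ ∨ W' = W) ∧
      m ≤ Module.finrank ℚ W := by
  haveI : Fact p.Prime := ⟨hp⟩
  have hinj : Function.Injective (Int.castRingHom ℚ) := fun a b hab => by
    have : (a : ℚ) = (b : ℚ) := hab
    exact_mod_cast this
  have hfm : f.Monic := hinj.monic_map_iff.2 (hf ▸ t.charpoly_monic)
  obtain ⟨h, hirr_h, hhf, hdeg_h⟩ := exists_irreducible_factor_of_mod_p hfm hp hirr hdvd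
  have hm1 : 1 ≤ m := hdeg ▸ hirr.natDegree_pos
  have hdegh : m ≤ h.natDegree := hdeg ▸ hdeg_h
  have hprim : h.IsPrimitive := by
    intro r hCr
    obtain ⟨d, hd⟩ := hCr
    rcases hirr_h.isUnit_or_isUnit hd with hu | hu
    · exact isUnit_C.mp hu
    · exfalso
      have h1 : h.natDegree ≤ (C r).natDegree + d.natDegree := hd ▸ natDegree_mul_le
      rw [natDegree_C, natDegree_eq_zero_of_isUnit hu] at h1
      omega
  set q : Polynomial ℚ := h.map (Int.castRingHom ℚ) with hqdef
  have hq_irr : Irreducible q :=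
    (Polynomial.IsPrimitive.Int.irreducible_iff_irreducible_map_cast hprim).1 hirr_h
  have hq_dvd : q ∣ LinearMap.charpoly t := by
    obtain ⟨c, hc⟩ := hhf
    exact ⟨c.map (Int.castRingHom ℚ), by rw [← hf, hc, Polynomial.map_mul]⟩
  have hq_deg : m ≤ q.natDegree := by
    rw [hqdef, natDegree_map_eq_of_injective hinj]
    exact hdegh
  set u := Polynomial.aeval t q with hu
  have hker : LinearMap.ker u ≠ ⊥ :=
    ker_aeval_ne_bot_of_irreducible_dvd_charpoly t hq_irr hq_dvd
  have huT : u ∈ T := by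
    have h0 := Polynomial.aeval_subalgebra_coe q T (⟨t, ht⟩ : T)
    have h1 : (Polynomial.aeval t) q
        = ((Polynomial.aeval (⟨t, ht⟩ : T)) q : Module.End ℚ V) := h0.symm
    rw [hu, h1]
    exact SetLike.coe_mem _
  have hstab : ∀ s ∈ T, ∀ w ∈ LinearMap.ker u, s w ∈ LinearMap.ker u := by
    intro s hs w hw
    rw [LinearMap.mem_ker] at hw ⊢
    calc u (s w) = (u * s) w := rfl
    _ = (s * u) w := by rw [hcomm u huT s hs]
    _ = s (u w) := rfl
    _ = 0 := by rw [hw, map_zero]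
  obtain ⟨W, hWS, hmin⟩ := IsArtinian.set_has_minimal
    {W : Submodule ℚ V | W ≠ ⊥ ∧ W ≤ LinearMap.ker u ∧ ∀ s ∈ T, ∀ w ∈ W, s w ∈ W}
    ⟨LinearMap.ker u, hker, le_rfl, hstab⟩
  obtain ⟨hWne, hWle, hWstab⟩ := hWS
  refine ⟨W, hWstab, hWne, ?_, ?_⟩
  · intro W' hW'stab hW'le
    by_cases hW' : W' = ⊥
    · exact Or.inl hW'
    · right
      rcases hW'le.lt_or_eq with hlt | heq
      · exact absurd hlt (hmin W' ⟨hW', hW'le.trans hWle, hW'stab⟩)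
      · exact heq
  · -- dimension bound
    have htW : ∀ x ∈ W, t x ∈ W := fun x hx => hWstab t ht x hx
    haveI : Nontrivial W := Submodule.nontrivial_iff_ne_bot.2 hWne
    have haev : Polynomial.aeval (t.restrict htW) q = 0 := by
      ext w
      have h1 := aeval_restrict_apply t q W htW w
      have h2 : u (w : V) = 0 := LinearMap.mem_ker.1 (hWle w.2)
      rw [hu] at h2
      simp only [LinearMap.zero_apply, h1, h2, ZeroMemClass.coe_zero]
    have hint : IsIntegral ℚ (t.restrict htW) := Algebra.IsIntegral.isIntegral (t.restrict htW)
    have hdvdmin : minpoly ℚ (t.restrict htW) ∣ q := minpoly.dvd ℚ (t.restrict htW) haev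
    have hmu : ¬ IsUnit (minpoly ℚ (t.restrict htW)) := by
      intro hunit
      have h1 : minpoly ℚ (t.restrict htW) = 1 := (minpoly.monic hint).eq_one_of_isUnit hunit
      have h2 := minpoly.aeval ℚ (t.restrict htW)
      rw [h1, map_one] at h2
      obtain ⟨w, hw⟩ := exists_ne (0 : W)
      apply hw
      calc w = (1 : Module.End ℚ W) w := rfl
      _ = (0 : Module.End ℚ W) w := by rw [h2]
      _ = 0 := rfl
    obtain ⟨c, hc⟩ := hdvdmin
    have hcu : IsUnit c := (hq_irr.isUnit_or_isUnit hc).resolve_left hmu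
    have hdegq : q.natDegree = (minpoly ℚ (t.restrict htW)).natDegree := by
      rw [hc, natDegree_mul (minpoly.ne_zero hint) hcu.ne_zero,
        natDegree_eq_zero_of_isUnit hcu, add_zero]
    have h5 : (minpoly ℚ (t.restrict htW)).natDegree ≤ Module.finrank ℚ W := by
      have hd := LinearMap.minpoly_dvd_charpoly (t.restrict htW)
      have h6 := Polynomial.natDegree_le_of_dvd hd ((t.restrict htW).charpoly_monic).ne_zero
      rwa [LinearMap.charpoly_natDegree] at h6
    omega
end
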